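/- Let G = (V, E) be a finite simple undirected graph with V = {1,…,N}, N ≥ 1. Let p ∈ ℝ^N satisfy p_i ≥ 0 for all i and Σ_{i=1}^N p_i ≤ 1. Consider the binary game where each player chooses x_i ∈ {0,1} and receives utility U_i(x) = (x_i/N) · ( p_i·(1 + Σ_{j ≠ i, {i,j} ∈ E} x_j) − 1 ). Let x* ∈ {0,1}^N be a pure Nash equilibrium of this game and let N' = { i : x*_i = 1 }. If N' is nonempty, then: (a) p_i = 1/|N'| for every i ∈ N' and p_i = 0 for every i ∉ N'; and (b) N' is a clique of G, i.e. {i,j} ∈ E for every pair of distinct i, j ∈ N'. -/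

import Mathlib

/-- structure lemma for the Max-Clique reduction.  In the binary game
with utilities `U i x = (x i / N) * (p i * (1 + ∑_{j ≠ i, ij ∈ E} x j) - 1)` induced
by a feasible provisional allocation `p`, the support of any pure Nash equilibrium,
if nonempty, receives equal shares `1/|S|` (zero outside) and forms a clique. -/
theorem pne_support_is_clique
    (N : ℕ) (hN : 1 ≤ N) (G : SimpleGraph (Fin N)) [DecidableRel G.Adj]
    (p : Fin N → ℝ) (hp : ∀ i, 0 ≤ p i) (hpsum : ∑ i, p i ≤ 1)
    (U : Fin N → (Fin N → ℝ) → ℝ)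
    (hU : ∀ i x, U i x = (x i / N) *
      (p i * (1 + ∑ j ∈ Finset.univ.filter (fun j => j ≠ i ∧ G.Adj i j), x j) - 1))
    (x : Fin N → ℝ) (hx01 : ∀ i, x i = 0 ∨ x i = 1)
    (hNE : ∀ i, U i (Function.update x i (1 - x i)) ≤ U i x)
    (S : Finset (Fin N)) (hS : ∀ i, i ∈ S ↔ x i = 1) (hSne : S.Nonempty) :
    (∀ i ∈ S, p i = 1 / (S.card : ℝ)) ∧ (∀ i ∉ S, p i = 0) ∧
    (∀ i ∈ S, ∀ j ∈ S, i ≠ j → G.Adj i j) := by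
  classical
  set m := S.card with hm
  have hm1 : 1 ≤ m := Finset.card_pos.mpr hSne
  have hmR : (0:ℝ) < m := by exact_mod_cast hm1
  have hNR : (0:ℝ) < N := by exact_mod_cast hN
  -- value of x as indicator of S
  have hxval : ∀ j, x j = if j ∈ S then 1 else 0 := by
    intro j
    by_cases h : j ∈ S
    · simp [h, (hS j).mp h]
    · rcases hx01 j with h0 | h1
      · simp [h, h0]
      · exact absurd ((hS j).mpr h1) h
  -- the neighbor set and its intersection with S
  set T : Fin N → Finset (Fin N) :=
    fun i => Finset.univ.filter (fun j => j ≠ i ∧ G.Adj i j) with hT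
  set F : Fin N → Finset (Fin N) := fun i => (T i).filter (· ∈ S) with hF
  have hA : ∀ i, (∑ j ∈ T i, x j) = ((F i).card : ℝ) := by
    intro i
    rw [Finset.sum_congr rfl (fun j _ => hxval j)]
    rw [Finset.sum_boole]
  have hFsub : ∀ i, F i ⊆ S.erase i := by
    intro i j hj
    simp only [hF, hT, Finset.mem_filter, Finset.mem_univ, true_and] at hj
    exact Finset.mem_erase.mpr ⟨hj.1.1, hj.2⟩
  have hFcard : ∀ i ∈ S, (F i).card ≤ m - 1 := by
    intro i hi
    have := Finset.card_le_card (hFsub i)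
    rwa [Finset.card_erase_of_mem hi] at this
  -- Nash condition for i ∈ S : p i * (1 + |F i|) ≥ 1
  have hnash : ∀ i ∈ S, 1 ≤ p i * (1 + ((F i).card : ℝ)) := by
    intro i hi
    have hxi : x i = 1 := (hS i).mp hi
    have h := hNE i
    rw [hU, hU] at h
    have hupd : ∀ j ∈ T i, Function.update x i (1 - x i) j = x j := by
      intro j hj
      simp only [hT, Finset.mem_filter, Finset.mem_univ, true_and] at hj
      exact Function.update_of_ne hj.1 _ x
    rw [Finset.sum_congr rfl hupd] at h
    rw [Function.update_self, hxi] at h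
    simp only [sub_self, zero_div, zero_mul] at h
    rw [hA] at h
    have hE : (0:ℝ) ≤ p i * (1 + ((F i).card : ℝ)) - 1 := by
      by_contra hc
      push_neg at hc
      nlinarith [mul_pos (one_div_pos.mpr hNR) (neg_pos.mpr hc)]
    linarith
  -- lower bound p i ≥ 1/m on S
  have hplow : ∀ i ∈ S, 1 / (m:ℝ) ≤ p i := by
    intro i hi
    have h1 := hnash i hi
    have h2 : (1:ℝ) + ((F i).card : ℝ) ≤ m := by
      have := hFcard i hi
      have : ((F i).card : ℝ) ≤ ((m - 1 : ℕ) : ℝ) := by exact_mod_cast this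
      rw [Nat.cast_sub hm1] at this
      push_cast at this ⊢
      linarith
    have hpos : (0:ℝ) < 1 + ((F i).card : ℝ) := add_pos_of_pos_of_nonneg one_pos (Nat.cast_nonneg _)
    rw [div_le_iff₀ hmR]
    nlinarith [hp i]
  -- sum over S is between 1 and 1
  have hsumS_le : ∑ i ∈ S, p i ≤ 1 := by
    refine le_trans ?_ hpsum
    exact Finset.sum_le_sum_of_subset_of_nonneg (Finset.subset_univ S)
      (fun i _ _ => hp i)
  have hsumS_ge : (1:ℝ) ≤ ∑ i ∈ S, p i := by
    calc (1:ℝ) = ∑ _i ∈ S, 1 / (m:ℝ) := by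
          rw [Finset.sum_const, hm]
          rw [nsmul_eq_mul]; exact (mul_one_div_cancel hmR.ne').symm
      _ ≤ ∑ i ∈ S, p i := Finset.sum_le_sum hplow
  have hsumS : ∑ i ∈ S, p i = 1 := le_antisymm hsumS_le hsumS_ge
  -- equal shares on S
  have hshare : ∀ i ∈ S, p i = 1 / (m:ℝ) := by
    have hzero : ∑ i ∈ S, (p i - 1 / (m:ℝ)) = 0 := by
      rw [Finset.sum_sub_distrib, hsumS, Finset.sum_const, hm]
      rw [nsmul_eq_mul]; exact sub_eq_zero.mpr (mul_one_div_cancel hmR.ne').symm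
    have := (Finset.sum_eq_zero_iff_of_nonneg
      (fun i hi => sub_nonneg.mpr (hplow i hi))).mp hzero
    intro i hi
    have := this i hi
    linarith [this]
  -- zero off S
  have hzeroS : ∀ i ∉ S, p i = 0 := by
    have hsplit : ∑ i ∈ S, p i + ∑ i ∈ Sᶜ, p i = ∑ i, p i :=
      Finset.sum_add_sum_compl S p
    have hcomp_le : ∑ i ∈ Sᶜ, p i ≤ 0 := by
      rw [hsumS] at hsplit; linarith
    have hcomp_ge : 0 ≤ ∑ i ∈ Sᶜ, p i :=
      Finset.sum_nonneg (fun i _ => hp i)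
    have hcomp : ∑ i ∈ Sᶜ, p i = 0 := le_antisymm hcomp_le hcomp_ge
    intro i hi
    exact (Finset.sum_eq_zero_iff_of_nonneg (fun j _ => hp j)).mp hcomp i
      (Finset.mem_compl.mpr hi)
  refine ⟨hshare, hzeroS, ?_⟩
  -- clique
  intro i hi j hj hij
  have h1 := hnash i hi
  rw [hshare i hi] at h1
  have hAge : (m:ℝ) - 1 ≤ ((F i).card : ℝ) := by
    rw [div_mul_eq_mul_div, le_div_iff₀ hmR, one_mul] at h1
    linarith
  have hcardge : m - 1 ≤ (F i).card := by
    have : ((m - 1 : ℕ) : ℝ) ≤ ((F i).card : ℝ) := by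
      rw [Nat.cast_sub hm1]; exact_mod_cast hAge
    exact_mod_cast this
  have heq : F i = S.erase i := by
    apply Finset.eq_of_subset_of_card_le (hFsub i)
    rw [Finset.card_erase_of_mem hi]
    exact hcardge
  have hjmem : j ∈ F i := by
    rw [heq]; exact Finset.mem_erase.mpr ⟨hij.symm, hj⟩
  simp only [hF, hT, Finset.mem_filter, Finset.mem_univ, true_and] at hjmem
  exact hjmem.1.2
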